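/- For all rational C ∉ {10, 22}, with d = C(5C+22)/(10−C), Y(C) = 5(5C+22)(C−1)(C+2)²/(2(C−22)(C−10)), and Y*(C) = Y(−2d/C) (assuming C ≠ 0 and −2d/C ∉ {10,22}), one has 1 + Y(C) + Y*(C) = d(d+1)/2. -/

import Mathlib

/-- The dimension of `Y` as a function of the central charge. -/
noncomputable def dimY (C : ℚ) : ℚ :=
  5 * (5 * C + 22) * (C - 1) * (C + 2)^2 / (2 * (C - 22) * (C - 10))

/-- `Sym(g ⊗ g) = 1 ⊕ Y ⊕ Y*` at the level of dimensions:
`1 + Y(C) + Y(C*) = d(d+1)/2` with `d = C(5C+22)/(10-C)` and `C* = -2d/C`. -/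
theorem sym_square_decomposition (C : ℚ) (hC0 : C ≠ 0) (hC10 : C ≠ 10) (hC22 : C ≠ 22)
    (d : ℚ) (hd : d = C * (5 * C + 22) / (10 - C))
    (h10 : -2 * d / C ≠ 10) (h22 : -2 * d / C ≠ 22) :
    1 + dimY C + dimY (-2 * d / C) = d * (d + 1) / 2 := by
  have h10' : (10 : ℚ) - C ≠ 0 := fun h => hC10 (by linarith [sub_eq_zero.mp h])
  have hC10' : C - 10 ≠ 0 := sub_ne_zero.mpr hC10
  have hC22' : C - 22 ≠ 0 := sub_ne_zero.mpr hC22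
  have hE : -2 * d / C = (-10 * C - 44) / (10 - C) := by
    rw [hd]; field_simp; ring
  rw [hE, hd]
  have hE10 : (-10 * C - 44) / (10 - C) - 10 ≠ 0 := by
    rw [div_sub' h10']
    refine div_ne_zero (fun h => hC0 ?_) h10'
    linarith
  have hE22 : (-10 * C - 44) / (10 - C) - 22 ≠ 0 := by
    rw [div_sub' h10']
    refine div_ne_zero (fun h => hC22' ?_) h10'
    linarith
  have key : dimY ((-10 * C - 44) / (10 - C)) =
      -135 * C * (C + 6) * (C + 2)^2 / ((10 - C)^2 * (C - 22)) := by
    unfold dimY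
    rw [div_eq_div_iff (by
      refine mul_ne_zero (mul_ne_zero two_ne_zero hE22) hE10)
      (mul_ne_zero (pow_ne_zero _ h10') hC22')]
    field_simp
    ring
  rw [key]
  unfold dimY
  field_simp
  ring
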